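/- (Security of the six-state protocol.) Let Alice prepare a qubit in an eigenstate of one of σ_x, σ_y, σ_z, choosing the two basis states of the chosen basis with equal probability 1/2. Let a joint receiver (Bob, Eve and Fred together) measure with an arbitrary POVM {M_s}, and let f, g, h be arbitrary functions on the outcome set (the coarse-grainings giving Bob's, Eve's, and Fred's outcomes respectively). Define I_x(A:B) as the mutual information between Alice's σ_x-basis input and f(s), I_y(A:E) between Alice's σ_y-basis input and g(s), and I_z(A:F) between Alice's σ_z-basis input and h(s). Then I_x(A:B) + I_y(A:E) + I_z(A:F) ≤ 1. -/

import Mathlib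

open scoped BigOperators ComplexOrder
open Matrix

noncomputable section

/-- Shannon entropy (in bits) of a finitely-indexed probability vector. -/
def shannonEntropy {ι : Type*} [Fintype ι] (q : ι → ℝ) : ℝ :=
  -∑ i, q i * Real.logb 2 (q i)

/-- Born probability ⟨v|M|v⟩ of POVM element `M` on the (unit vector) state `v`. -/
def outProb {d : ℕ} (M : Matrix (Fin d) (Fin d) ℂ) (v : Fin d → ℂ) : ℝ :=
  (star v ⬝ᵥ M.mulVec v).re

/-- A finite family of matrices is a POVM if each member is positive semidefinite
and they sum to the identity. -/
def IsPOVM {d : ℕ} {S : Type*} [Fintype S] (E : S → Matrix (Fin d) (Fin d) ℂ) : Prop :=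
  (∀ s, (E s).PosSemidef) ∧ ∑ s, E s = 1

/-- `B` lists the vectors of an orthonormal basis of ℂ^d. -/
def IsONB {d : ℕ} (B : Fin d → Fin d → ℂ) : Prop :=
  ∀ i j, star (B i) ⬝ᵥ B j = if i = j then 1 else 0

/-- Two bases of ℂ^d are mutually unbiased: all squared overlaps equal 1/d. -/
def AreMUB {d : ℕ} (B C : Fin d → Fin d → ℂ) : Prop :=
  ∀ i j, ‖star (B i) ⬝ᵥ C j‖ ^ 2 = 1 / d

/-- Mutual information (in bits) between Alice's input `i` (prior `p i`, state `B i`)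
and Bob's POVM outcome `s`:  `I = H({p i}) - ∑ s p(s) H({p_{i|s}})`. -/
def mutInfo {d : ℕ} {S : Type*} [Fintype S] (B : Fin d → Fin d → ℂ) (p : Fin d → ℝ)
    (E : S → Matrix (Fin d) (Fin d) ℂ) : ℝ :=
  shannonEntropy p -
    ∑ s, (∑ i, p i * outProb (E s) (B i)) *
      shannonEntropy (fun i =>
        p i * outProb (E s) (B i) / ∑ j, p j * outProb (E s) (B j))

/-- The eigenbasis of the Pauli matrix σ_x : (1,1)/√2 and (1,-1)/√2. -/
def xbasis : Fin 2 → Fin 2 → ℂ :=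
  ![![(Real.sqrt 2 : ℂ)⁻¹, (Real.sqrt 2 : ℂ)⁻¹],
    ![(Real.sqrt 2 : ℂ)⁻¹, -(Real.sqrt 2 : ℂ)⁻¹]]

/-- The eigenbasis of the Pauli matrix σ_y : (1,i)/√2 and (1,-i)/√2. -/
def ybasis : Fin 2 → Fin 2 → ℂ :=
  ![![(Real.sqrt 2 : ℂ)⁻¹, (Real.sqrt 2 : ℂ)⁻¹ * Complex.I],
    ![(Real.sqrt 2 : ℂ)⁻¹, -((Real.sqrt 2 : ℂ)⁻¹ * Complex.I)]]

/-- The eigenbasis of the Pauli matrix σ_z : the standard basis. -/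
def zbasis : Fin 2 → Fin 2 → ℂ := ![![1, 0], ![0, 1]]

/-- Coarse-grained mutual information: Alice sends `B i` with prior `p i`, the POVM
outcome `s` is coarse-grained to `f s`; the joint distribution is
`p_{ib} = p i * ∑_{s : f s = b} ⟨i|E s|i⟩`, and
`I = H({∑_b p_{ib}}_i) − ∑_b (∑_i p_{ib}) H({p_{ib}/∑_j p_{jb}}_i)`. -/
def mutInfoCG {d : ℕ} {S O : Type*} [Fintype S] [Fintype O] [DecidableEq O]
    (B : Fin d → Fin d → ℂ) (p : Fin d → ℝ)
    (E : S → Matrix (Fin d) (Fin d) ℂ) (f : S → O) : ℝ :=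
  shannonEntropy
      (fun i => ∑ b, p i * ∑ s ∈ Finset.univ.filter (fun s => f s = b), outProb (E s) (B i)) -
    ∑ b, (∑ i, p i * ∑ s ∈ Finset.univ.filter (fun s => f s = b), outProb (E s) (B i)) *
      shannonEntropy (fun i =>
        (p i * ∑ s ∈ Finset.univ.filter (fun s => f s = b), outProb (E s) (B i)) /
          ∑ j, p j * ∑ s ∈ Finset.univ.filter (fun s => f s = b), outProb (E s) (B j))


section SixStateAux1
open Real

/-- auxiliary function g -/
def sixG (w : ℝ) : ℝ := binEntropy ((1+w)/2) + (w^2 - 1) * Real.log 2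

def sixPhi (w : ℝ) : ℝ := 2*w*Real.log 2 + (Real.log (1-w) - Real.log (1+w))/2

lemma sixG_hasDeriv {w : ℝ} (h1 : -1 < w) (h2 : w < 1) :
    HasDerivAt sixG (sixPhi w) w := by
  have hp0 : (1+w)/2 ≠ 0 := by nlinarith
  have hp1 : (1+w)/2 ≠ 1 := by intro h; nlinarith [h]
  have hb := Real.hasDerivAt_binEntropy hp0 hp1
  have hc : HasDerivAt (fun w : ℝ => (1+w)/2) (1/2) w := by
    simpa using ((hasDerivAt_id w).const_add 1).div_const 2
  have hcomp := hb.comp w hc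
  have hq : HasDerivAt (fun w : ℝ => (w^2-1)*Real.log 2)
      (2*w*Real.log 2) w := by
    have : HasDerivAt (fun w : ℝ => w^2-1) (2*w) w := by
      simpa using ((hasDerivAt_pow 2 w).sub_const 1)
    simpa [mul_comm] using this.mul_const (Real.log 2)
  have := hcomp.add hq
  refine HasDerivAt.congr_deriv this ?_
  have e1 : 1 - (1+w)/2 = (1-w)/2 := by ring
  rw [e1, Real.log_div (by linarith) (by norm_num),
    Real.log_div (by linarith) (by norm_num)]
  unfold sixPhi
  ring

def sixPsi (w : ℝ) : ℝ := 2*Real.log 2 - 1/(1-w^2)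

lemma sixPhi_hasDeriv {w : ℝ} (h1 : -1 < w) (h2 : w < 1) :
    HasDerivAt sixPhi (sixPsi w) w := by
  have ha : HasDerivAt (fun w : ℝ => Real.log (1-w)) (-(1/(1-w))) w := by
    have h : HasDerivAt (fun w : ℝ => 1-w) (-1) w := by
      simpa using ((hasDerivAt_id w).const_sub 1)
    simpa [div_eq_mul_inv, Function.comp_def] using (Real.hasDerivAt_log (by linarith)).comp w h
  have hb : HasDerivAt (fun w : ℝ => Real.log (1+w)) (1/(1+w)) w := by
    have h : HasDerivAt (fun w : ℝ => 1+w) 1 w := by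
      simpa using ((hasDerivAt_id w).const_add 1)
    simpa [div_eq_mul_inv, Function.comp_def] using (Real.hasDerivAt_log (by linarith)).comp w h
  have hlin : HasDerivAt (fun w : ℝ => 2*w*Real.log 2) (2*Real.log 2) w := by
    have : HasDerivAt (fun w : ℝ => w * (2*Real.log 2)) (2*Real.log 2) w := by
      simpa using (hasDerivAt_id w).mul_const (2*Real.log 2)
    convert this using 2 with x; ring
  have := hlin.add ((ha.sub hb).div_const 2)
  refine HasDerivAt.congr_deriv this ?_
  unfold sixPsi
  have hw1 : (1:ℝ) - w ≠ 0 := by linarith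
  have hw2 : (1:ℝ) + w ≠ 0 := by linarith
  have h12 : (1:ℝ) - w^2 = (1-w)*(1+w) := by ring
  rw [h12]
  field_simp
  ring

lemma log2_gt_half : (1:ℝ)/2 < Real.log 2 := by
  have := Real.log_two_gt_d9
  linarith

/-- the key binary-entropy inequality, in nats -/
lemma binEntropy_quad {w : ℝ} (h0 : 0 ≤ w) (h1 : w ≤ 1) :
    (1 - w^2) * Real.log 2 ≤ binEntropy ((1+w)/2) := by
  rw [← sub_nonneg]
  have hG : binEntropy ((1+w)/2) - (1-w^2)*Real.log 2 = sixG w := by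
    unfold sixG; ring
  rw [hG]
  set w₀ : ℝ := Real.sqrt (1 - 1/(2*Real.log 2)) with hw₀def
  have hl2 : (0:ℝ) < Real.log 2 := Real.log_pos (by norm_num)
  have harg : (0:ℝ) < 1 - 1/(2*Real.log 2) := by
    have : 1/(2*Real.log 2) < 1 := by
      rw [div_lt_one (by linarith)]
      linarith [log2_gt_half]
    linarith
  have hw₀pos : 0 < w₀ := Real.sqrt_pos.mpr harg
  have hw₀sq : w₀^2 = 1 - 1/(2*Real.log 2) := Real.sq_sqrt harg.le
  have hw₀lt1 : w₀ < 1 := by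
    rw [show (1:ℝ) = Real.sqrt 1 by simp [Real.sqrt_one]]
    apply Real.sqrt_lt_sqrt harg.le
    have : 0 < 1/(2*Real.log 2) := by positivity
    linarith
  -- psi nonneg on [0, w₀], nonpos on [w₀, 1)
  have hpsi_nonneg : ∀ x ∈ Set.Icc (0:ℝ) w₀, 0 ≤ sixPsi x := by
    intro x ⟨hx0, hxw⟩
    unfold sixPsi
    have hx1 : x < 1 := lt_of_le_of_lt hxw hw₀lt1
    have hxsq : x^2 ≤ w₀^2 := by nlinarith
    have h1x : 1/(2*Real.log 2) ≤ 1 - x^2 := by rw [hw₀sq] at hxsq; linarith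
    have hpos : 0 < 1 - x^2 := lt_of_lt_of_le (by positivity) h1x
    have : 1/(1-x^2) ≤ 2*Real.log 2 := by
      rw [div_le_iff₀ hpos]
      rw [div_le_iff₀ (by linarith) ] at h1x
      nlinarith
    linarith
  have hpsi_nonpos : ∀ x ∈ Set.Ioo w₀ 1, sixPsi x ≤ 0 := by
    intro x ⟨hxw, hx1⟩
    unfold sixPsi
    have hx0 : 0 < x := lt_trans hw₀pos hxw
    have hxsq : w₀^2 < x^2 := by nlinarith
    have h1x : 1 - x^2 < 1/(2*Real.log 2) := by rw [hw₀sq] at hxsq; linarith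
    have hpos : 0 < 1 - x^2 := by nlinarith
    have : 2*Real.log 2 ≤ 1/(1-x^2) := by
      rw [le_div_iff₀ hpos]
      rw [lt_div_iff₀ (by linarith)] at h1x
      nlinarith
    linarith
  -- phi monotone on [0,w₀], hence nonneg there (phi 0 = 0)
  have hphi_cont : ∀ x ∈ Set.Icc (-(1/2):ℝ) w₀, ContinuousAt sixPhi x := by
    intro x ⟨hx0, hxw⟩
    exact (sixPhi_hasDeriv (by linarith) (lt_of_le_of_lt hxw hw₀lt1)).continuousAt
  have hphi_mono : MonotoneOn sixPhi (Set.Icc (0:ℝ) w₀) := by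
    apply monotoneOn_of_deriv_nonneg (convex_Icc _ _)
    · exact fun x hx => ((sixPhi_hasDeriv (by linarith [hx.1]) (lt_of_le_of_lt hx.2 hw₀lt1)).continuousAt).continuousWithinAt
    · intro x hx
      rw [interior_Icc] at hx
      exact (sixPhi_hasDeriv (by linarith [hx.1]) (hx.2.trans hw₀lt1)).differentiableAt.differentiableWithinAt
    · intro x hx
      rw [interior_Icc] at hx
      rw [(sixPhi_hasDeriv (by linarith [hx.1]) (hx.2.trans hw₀lt1)).deriv]
      exact hpsi_nonneg x ⟨hx.1.le, hx.2.le⟩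
  have hphi0 : sixPhi 0 = 0 := by unfold sixPhi; simp
  have hphi_nonneg : ∀ x ∈ Set.Icc (0:ℝ) w₀, 0 ≤ sixPhi x := by
    intro x hx
    rw [← hphi0]
    exact hphi_mono (Set.left_mem_Icc.mpr hw₀pos.le) hx hx.1
  -- g monotone on [0,w₀], hence ≥ g 0 = 0 there
  have hGcont : Continuous sixG := by
    unfold sixG
    have hc1 : Continuous fun w : ℝ => (1+w)/2 := by fun_prop
    have hc2 : Continuous fun w : ℝ => (w^2-1)*Real.log 2 := by fun_prop
    exact (Real.binEntropy_continuous.comp hc1).add hc2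
  have hg_mono : MonotoneOn sixG (Set.Icc (0:ℝ) w₀) := by
    apply monotoneOn_of_deriv_nonneg (convex_Icc _ _) hGcont.continuousOn
    · intro x hx
      rw [interior_Icc] at hx
      exact (sixG_hasDeriv (by linarith [hx.1]) (hx.2.trans hw₀lt1)).differentiableAt.differentiableWithinAt
    · intro x hx
      rw [interior_Icc] at hx
      rw [(sixG_hasDeriv (by linarith [hx.1]) (hx.2.trans hw₀lt1)).deriv]
      exact hphi_nonneg x ⟨hx.1.le, hx.2.le⟩
  have hG0 : sixG 0 = 0 := by
    unfold sixG
    rw [show ((1:ℝ)+0)/2 = 2⁻¹ by norm_num, Real.binEntropy_two_inv]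
    ring
  have hg_nonneg_left : ∀ x ∈ Set.Icc (0:ℝ) w₀, 0 ≤ sixG x := by
    intro x hx
    rw [← hG0]
    exact hg_mono (Set.left_mem_Icc.mpr hw₀pos.le) hx hx.1
  -- g concave on [w₀,1]
  have hg_concave : ConcaveOn ℝ (Set.Icc w₀ 1) sixG := by
    apply AntitoneOn.concaveOn_of_deriv (convex_Icc _ _) hGcont.continuousOn
    · intro x hx
      rw [interior_Icc] at hx
      exact (sixG_hasDeriv (by linarith [hw₀pos, hx.1]) hx.2).differentiableAt.differentiableWithinAt
    · rw [interior_Icc]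
      have hEq : ∀ x ∈ Set.Ioo w₀ 1, deriv sixG x = sixPhi x := by
        intro x hx
        exact (sixG_hasDeriv (by linarith [hw₀pos, hx.1]) hx.2).deriv
      have hanti : AntitoneOn sixPhi (Set.Ioo w₀ 1) := by
        apply antitoneOn_of_deriv_nonpos (convex_Ioo _ _)
        · exact fun x hx => ((sixPhi_hasDeriv (by linarith [hw₀pos, hx.1]) hx.2).continuousAt).continuousWithinAt
        · intro x hx
          rw [interior_Ioo] at hx
          exact (sixPhi_hasDeriv (by linarith [hw₀pos, hx.1]) hx.2).differentiableAt.differentiableWithinAt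
        · intro x hx
          rw [interior_Ioo] at hx
          rw [(sixPhi_hasDeriv (by linarith [hw₀pos, hx.1]) hx.2).deriv]
          exact hpsi_nonpos x hx
      intro x hx y hy hxy
      rw [hEq x hx, hEq y hy]
      exact hanti hx hy hxy
  have hG1 : sixG 1 = 0 := by
    unfold sixG
    rw [show ((1:ℝ)+1)/2 = 1 by norm_num, Real.binEntropy_one]
    ring
  -- combine
  rcases le_or_gt w w₀ with hc | hc
  · exact hg_nonneg_left w ⟨h0, hc⟩
  · -- w ∈ (w₀, 1]: use concavity
    have hGw₀ : 0 ≤ sixG w₀ := hg_nonneg_left w₀ ⟨hw₀pos.le, le_refl _⟩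
    have hseg := hg_concave.ge_on_segment' (Set.left_mem_Icc.mpr hw₀lt1.le)
      (Set.right_mem_Icc.mpr hw₀lt1.le)
      (a := (1-w)/(1-w₀)) (b := (w-w₀)/(1-w₀))
      (div_nonneg (by linarith) (by linarith))
      (div_nonneg (by linarith) (by linarith))
      (by rw [← add_div, show (1:ℝ)-w+(w-w₀) = 1-w₀ by ring,
            div_self (by linarith : (1:ℝ)-w₀ ≠ 0)])
    have hcombo : ((1-w)/(1-w₀)) • w₀ + ((w-w₀)/(1-w₀)) • (1:ℝ) = w := by
      have : (1:ℝ) - w₀ ≠ 0 := by linarith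
      simp only [smul_eq_mul]
      field_simp
      ring
    rw [hcombo] at hseg
    calc (0:ℝ) ≤ min (sixG w₀) (sixG 1) := le_min hGw₀ hG1.ge
    _ ≤ sixG w := hseg



end SixStateAux1

section SixStateAux2

lemma two_mul_dot_x0 (M : Matrix (Fin 2) (Fin 2) ℂ) :
    2 * (star (xbasis 0) ⬝ᵥ M.mulVec (xbasis 0)) = M 0 0 + M 0 1 + M 1 0 + M 1 1 := by
  have h2 : ((Real.sqrt 2 : ℝ) : ℂ) * ((Real.sqrt 2 : ℝ) : ℂ) = 2 := by
    rw [← Complex.ofReal_mul, Real.mul_self_sqrt (by norm_num)]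
    norm_num
  have hne : ((Real.sqrt 2 : ℝ) : ℂ) ≠ 0 := by
    intro h
    rw [Complex.ofReal_eq_zero] at h
    exact (Real.sqrt_pos.mpr (by norm_num : (0:ℝ) < 2)).ne' h
  simp only [xbasis, Matrix.cons_val_zero, Matrix.cons_val_one, Matrix.head_cons,
    dotProduct, Matrix.mulVec, Fin.sum_univ_two, Pi.star_apply,
    star_inv₀, Complex.star_def, map_inv₀, Complex.conj_ofReal]
  field_simp
  ring_nf
  rw [← h2]
  ring

lemma sqrt2c_sq : ((Real.sqrt 2 : ℝ) : ℂ) * ((Real.sqrt 2 : ℝ) : ℂ) = 2 := by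
  rw [← Complex.ofReal_mul, Real.mul_self_sqrt (by norm_num)]
  norm_num

lemma sqrt2c_ne : ((Real.sqrt 2 : ℝ) : ℂ) ≠ 0 := by
  intro h
  rw [Complex.ofReal_eq_zero] at h
  exact (Real.sqrt_pos.mpr (by norm_num : (0:ℝ) < 2)).ne' h

lemma two_mul_dot_x1 (M : Matrix (Fin 2) (Fin 2) ℂ) :
    2 * (star (xbasis 1) ⬝ᵥ M.mulVec (xbasis 1)) = M 0 0 - M 0 1 - M 1 0 + M 1 1 := by
  simp only [xbasis, Matrix.cons_val_zero, Matrix.cons_val_one, Matrix.head_cons,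
    dotProduct, Matrix.mulVec, Fin.sum_univ_two, Pi.star_apply,
    star_inv₀, Complex.star_def, map_inv₀, Complex.conj_ofReal, star_neg, map_neg]
  field_simp
  ring_nf
  rw [← sqrt2c_sq]
  ring

lemma two_mul_dot_y0 (M : Matrix (Fin 2) (Fin 2) ℂ) :
    2 * (star (ybasis 0) ⬝ᵥ M.mulVec (ybasis 0))
      = M 0 0 + M 1 1 + (M 0 1 - M 1 0) * Complex.I := by
  simp only [ybasis, Matrix.cons_val_zero, Matrix.cons_val_one, Matrix.head_cons,
    dotProduct, Matrix.mulVec, Fin.sum_univ_two, Pi.star_apply,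
    star_inv₀, Complex.star_def, map_inv₀, Complex.conj_ofReal, star_neg, map_neg, _root_.map_mul,
    Complex.conj_I]
  have hI := Complex.I_mul_I
  field_simp
  ring_nf
  rw [← sqrt2c_sq]
  ring_nf
  rw [show (Complex.I^2 : ℂ) = -1 from Complex.I_sq]
  ring

lemma two_mul_dot_y1 (M : Matrix (Fin 2) (Fin 2) ℂ) :
    2 * (star (ybasis 1) ⬝ᵥ M.mulVec (ybasis 1))
      = M 0 0 + M 1 1 - (M 0 1 - M 1 0) * Complex.I := by
  simp only [ybasis, Matrix.cons_val_zero, Matrix.cons_val_one, Matrix.head_cons,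
    dotProduct, Matrix.mulVec, Fin.sum_univ_two, Pi.star_apply,
    star_inv₀, Complex.star_def, map_inv₀, Complex.conj_ofReal, star_neg, map_neg, _root_.map_mul,
    Complex.conj_I]
  field_simp
  ring_nf
  rw [← sqrt2c_sq]
  ring_nf
  rw [show (Complex.I^2 : ℂ) = -1 from Complex.I_sq]
  ring

lemma dot_z0 (M : Matrix (Fin 2) (Fin 2) ℂ) :
    star (zbasis 0) ⬝ᵥ M.mulVec (zbasis 0) = M 0 0 := by
  simp [zbasis, dotProduct, Matrix.mulVec, Fin.sum_univ_two]

lemma dot_z1 (M : Matrix (Fin 2) (Fin 2) ℂ) :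
    star (zbasis 1) ⬝ᵥ M.mulVec (zbasis 1) = M 1 1 := by
  simp [zbasis, dotProduct, Matrix.mulVec, Fin.sum_univ_two]

lemma outProb_x0 (M : Matrix (Fin 2) (Fin 2) ℂ) :
    outProb M (xbasis 0) = ((M 0 0).re + (M 1 1).re + ((M 0 1).re + (M 1 0).re))/2 := by
  have h := congrArg Complex.re (two_mul_dot_x0 M)
  simp only [Complex.mul_re, Complex.add_re, Complex.re_ofNat, Complex.im_ofNat,
    Complex.add_im, Complex.mul_im] at h
  unfold outProb
  linarith

lemma outProb_x1 (M : Matrix (Fin 2) (Fin 2) ℂ) :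
    outProb M (xbasis 1) = ((M 0 0).re + (M 1 1).re - ((M 0 1).re + (M 1 0).re))/2 := by
  have h := congrArg Complex.re (two_mul_dot_x1 M)
  simp only [Complex.mul_re, Complex.add_re, Complex.sub_re, Complex.re_ofNat,
    Complex.im_ofNat, Complex.add_im, Complex.sub_im, Complex.mul_im] at h
  unfold outProb
  linarith

lemma outProb_y0 (M : Matrix (Fin 2) (Fin 2) ℂ) :
    outProb M (ybasis 0) = ((M 0 0).re + (M 1 1).re - ((M 0 1).im - (M 1 0).im))/2 := by
  have h := congrArg Complex.re (two_mul_dot_y0 M)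
  simp only [Complex.mul_re, Complex.add_re, Complex.sub_re, Complex.re_ofNat,
    Complex.im_ofNat, Complex.add_im, Complex.sub_im, Complex.mul_im,
    Complex.I_re, Complex.I_im] at h
  unfold outProb
  linarith

lemma outProb_y1 (M : Matrix (Fin 2) (Fin 2) ℂ) :
    outProb M (ybasis 1) = ((M 0 0).re + (M 1 1).re + ((M 0 1).im - (M 1 0).im))/2 := by
  have h := congrArg Complex.re (two_mul_dot_y1 M)
  simp only [Complex.mul_re, Complex.add_re, Complex.sub_re, Complex.re_ofNat,
    Complex.im_ofNat, Complex.add_im, Complex.sub_im, Complex.mul_im,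
    Complex.I_re, Complex.I_im] at h
  unfold outProb
  linarith

lemma outProb_z0 (M : Matrix (Fin 2) (Fin 2) ℂ) : outProb M (zbasis 0) = (M 0 0).re := by
  unfold outProb; rw [dot_z0]

lemma outProb_z1 (M : Matrix (Fin 2) (Fin 2) ℂ) : outProb M (zbasis 1) = (M 1 1).re := by
  unfold outProb; rw [dot_z1]

open scoped ComplexOrder

lemma outProb_nonneg {M : Matrix (Fin 2) (Fin 2) ℂ} (hM : M.PosSemidef) (v : Fin 2 → ℂ) :
    0 ≤ outProb M v := by
  have := hM.re_dotProduct_nonneg v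
  simpa [outProb] using this

lemma outProb_sum {S : Type*} [Fintype S] (E : S → Matrix (Fin 2) (Fin 2) ℂ)
    (t : Finset S) (v : Fin 2 → ℂ) :
    ∑ s ∈ t, outProb (E s) v = outProb (∑ s ∈ t, E s) v := by
  unfold outProb
  rw [← Complex.re_sum]
  congr 1
  simp only [Matrix.mulVec, dotProduct, Fin.sum_univ_two, Matrix.sum_apply,
    Finset.sum_mul, Finset.mul_sum, mul_add, Finset.sum_add_distrib]

lemma herm_10 {M : Matrix (Fin 2) (Fin 2) ℂ} (hM : M.IsHermitian) :
    M 1 0 = starRingEnd ℂ (M 0 1) := by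
  have := congrFun (congrFun hM.symm 1) 0
  simpa [Matrix.conjTranspose_apply] using this

lemma quad_eval (M : Matrix (Fin 2) (Fin 2) ℂ) (h10 : M 1 0 = starRingEnd ℂ (M 0 1)) (c : ℝ) :
    outProb M ![M 0 1, (c:ℂ)]
      = (M 0 0).re * Complex.normSq (M 0 1) + 2*c*Complex.normSq (M 0 1)
        + (M 1 1).re * c^2 := by
  have hn : ((Complex.normSq (M 0 1) : ℝ) : ℂ) = starRingEnd ℂ (M 0 1) * (M 0 1) :=
    Complex.normSq_eq_conj_mul_self
  have key : star ![M 0 1, (c:ℂ)] ⬝ᵥ M.mulVec ![M 0 1, (c:ℂ)]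
      = ((Complex.normSq (M 0 1) : ℝ) : ℂ) * M 0 0
        + 2*(c:ℂ)*((Complex.normSq (M 0 1) : ℝ) : ℂ) + (c:ℂ)^2 * M 1 1 := by
    simp only [dotProduct, Matrix.mulVec, Fin.sum_univ_two, Matrix.cons_val_zero,
      Matrix.cons_val_one, Matrix.head_cons, Pi.star_apply, Complex.star_def,
      Complex.conj_ofReal]
    rw [h10]
    linear_combination (M 0 0 + 2*(c:ℂ)) * hn.symm
  unfold outProb
  rw [key]
  simp [Complex.add_re, Complex.mul_re, Complex.ofReal_re, Complex.ofReal_im,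
    Complex.mul_im, pow_two]
  ring

lemma normSq_od_le {M : Matrix (Fin 2) (Fin 2) ℂ} (hM : M.PosSemidef) :
    Complex.normSq (M 0 1) ≤ (M 0 0).re * (M 1 1).re := by
  have ha : 0 ≤ (M 0 0).re := by rw [← outProb_z0 M]; exact outProb_nonneg hM _
  have hd : 0 ≤ (M 1 1).re := by rw [← outProb_z1 M]; exact outProb_nonneg hM _
  set a := (M 0 0).re
  set d := (M 1 1).re
  set n := Complex.normSq (M 0 1) with hn
  have hnn : 0 ≤ n := Complex.normSq_nonneg _
  have hq : ∀ c : ℝ, 0 ≤ a * n + 2*c*n + d * c^2 := by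
    intro c
    rw [← quad_eval M (herm_10 hM.1) c]
    exact outProb_nonneg hM _
  rcases eq_or_lt_of_le hd with hd0 | hdpos
  · have h1 := hq (-(a+1))
    rw [← hd0] at h1
    nlinarith
  · have h1 := hq (-(n/d))
    have hexp : a * n + 2*(-(n/d))*n + d * (-(n/d))^2 = a*n - n^2/d := by
      field_simp
      ring
    rw [hexp] at h1
    rcases eq_or_lt_of_le hnn with hn0 | hnpos
    · nlinarith
    · have : n^2/d ≤ a*n := by linarith
      rw [div_le_iff₀ hdpos] at this
      nlinarith

lemma shannonEntropy_fin2 (q : Fin 2 → ℝ) :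
    shannonEntropy q = (Real.negMulLog (q 0) + Real.negMulLog (q 1)) / Real.log 2 := by
  simp only [shannonEntropy, Fin.sum_univ_two, Real.logb, Real.negMulLog]
  ring

lemma negMulLog_half : Real.negMulLog (1/2) = (1/2) * Real.log 2 := by
  simp only [Real.negMulLog, one_div, Real.log_inv]
  ring

lemma six_log_sum {ι : Type*} (s : Finset ι) (a t : ι → ℝ)
    (ha : ∀ i ∈ s, 0 ≤ a i) (hat : ∀ i ∈ s, a i ≤ t i) (ht : ∀ i ∈ s, 0 ≤ t i) :
    ∑ i ∈ s, t i * Real.negMulLog (a i / t i)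
      ≤ (∑ i ∈ s, t i) * Real.negMulLog ((∑ i ∈ s, a i) / (∑ i ∈ s, t i)) := by
  rcases eq_or_lt_of_le (Finset.sum_nonneg ht) with h0 | hpos
  · have hall : ∀ i ∈ s, t i = 0 :=
      (Finset.sum_eq_zero_iff_of_nonneg ht).mp h0.symm
    have hL : ∑ i ∈ s, t i * Real.negMulLog (a i / t i) = 0 :=
      Finset.sum_eq_zero fun i hi => by rw [hall i hi]; ring
    rw [hL, ← h0, zero_mul]
  · set T := ∑ i ∈ s, t i with hT
    have hTpos : 0 < T := hpos
    have key := Real.concaveOn_negMulLog.le_map_sum (t := s)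
      (w := fun i => t i / T) (p := fun i => a i / t i)
      (fun i hi => div_nonneg (ht i hi) hTpos.le)
      (by rw [← Finset.sum_div, div_self hTpos.ne'])
      (fun i hi => Set.mem_Ici.mpr (div_nonneg (ha i hi) (ht i hi)))
    have e1 : ∑ i ∈ s, (t i / T) • (a i / t i) = (∑ i ∈ s, a i) / T := by
      rw [Finset.sum_div]
      refine Finset.sum_congr rfl fun i hi => ?_
      rcases eq_or_lt_of_le (ht i hi) with h | h
      · have ha0 : a i = 0 := le_antisymm (h ▸ hat i hi) (ha i hi)
        rw [ha0, ← h]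
        simp
      · rw [smul_eq_mul]
        field_simp
    have e2 : ∑ i ∈ s, (t i / T) • Real.negMulLog (a i / t i)
        = (∑ i ∈ s, t i * Real.negMulLog (a i / t i)) / T := by
      rw [Finset.sum_div]
      exact Finset.sum_congr rfl fun i hi => by rw [smul_eq_mul, div_mul_eq_mul_div]
    rw [e1, e2] at key
    rw [div_le_iff₀ hTpos] at key
    calc ∑ i ∈ s, t i * Real.negMulLog (a i / t i)
        ≤ Real.negMulLog ((∑ i ∈ s, a i) / T) * T := key
      _ = T * Real.negMulLog ((∑ i ∈ s, a i) / T) := mul_comm _ _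

lemma six_basis_bound {S O : Type*} [Fintype S] [Fintype O] [DecidableEq O]
    (E : S → Matrix (Fin 2) (Fin 2) ℂ) (hE : IsPOVM E)
    (B : Fin 2 → Fin 2 → ℂ)
    (hBsum : ∀ M : Matrix (Fin 2) (Fin 2) ℂ,
      outProb M (B 0) + outProb M (B 1) = (M 0 0).re + (M 1 1).re)
    (hB0 : outProb 1 (B 0) = 1) (hB1 : outProb 1 (B 1) = 1) (f : S → O) :
    mutInfoCG B (fun _ => (1:ℝ)/2) E f ≤
      1 - ∑ s, (((E s 0 0).re + (E s 1 1).re)/2) *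
        shannonEntropy (fun i => outProb (E s) (B i) / ((E s 0 0).re + (E s 1 1).re)) := by
  obtain ⟨hpsd, hsumE⟩ := hE
  have hL2 : (0:ℝ) < Real.log 2 := Real.log_pos (by norm_num)
  simp only [mutInfoCG]
  set A : Fin 2 → O → ℝ :=
    fun i b => ∑ s ∈ Finset.univ.filter (fun s => f s = b), outProb (E s) (B i) with hA
  have hAnn : ∀ i b, 0 ≤ A i b :=
    fun i b => Finset.sum_nonneg fun s _ => outProb_nonneg (hpsd s) _
  have hAsum : ∀ i, ∑ b, A i b = 1 := by
    intro i
    rw [hA]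
    rw [Finset.sum_fiberwise Finset.univ f (fun s => outProb (E s) (B i))]
    rw [outProb_sum, hsumE]
    fin_cases i
    · exact hB0
    · exact hB1
  -- marginal entropy = 1
  have hmarg : shannonEntropy (fun i : Fin 2 => ∑ b, (1:ℝ)/2 * A i b) = 1 := by
    have he : (fun i : Fin 2 => ∑ b, (1:ℝ)/2 * A i b) = fun _ => (1:ℝ)/2 := by
      funext i
      rw [← Finset.mul_sum, hAsum i, mul_one]
    rw [he, shannonEntropy_fin2, negMulLog_half]
    field_simp
    norm_num
  rw [hmarg]
  -- conditional terms
  have ho : ∀ (i : Fin 2) s, 0 ≤ outProb (E s) (B i) := fun i s => outProb_nonneg (hpsd s) _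
  have htnn : ∀ s, 0 ≤ (E s 0 0).re + (E s 1 1).re := by
    intro s
    rw [← hBsum (E s)]
    exact add_nonneg (ho 0 s) (ho 1 s)
  have hole : ∀ (i : Fin 2) s, outProb (E s) (B i) ≤ (E s 0 0).re + (E s 1 1).re := by
    intro i s
    rw [← hBsum (E s)]
    fin_cases i
    · show outProb (E s) (B 0) ≤ outProb (E s) (B 0) + outProb (E s) (B 1)
      linarith [ho 1 s]
    · show outProb (E s) (B 1) ≤ outProb (E s) (B 0) + outProb (E s) (B 1)
      linarith [ho 0 s]
  have key : ∑ s, (((E s 0 0).re + (E s 1 1).re)/2) *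
        shannonEntropy (fun i => outProb (E s) (B i) / ((E s 0 0).re + (E s 1 1).re))
      ≤ ∑ b, (∑ i, (1:ℝ)/2 * A i b) *
          shannonEntropy (fun i => ((1:ℝ)/2 * A i b) / ∑ j, (1:ℝ)/2 * A j b) := by
    have hDb : ∀ b, (∑ i, (1:ℝ)/2 * A i b) *
          shannonEntropy (fun i => ((1:ℝ)/2 * A i b) / ∑ j, (1:ℝ)/2 * A j b)
        = (1/(2*Real.log 2)) * ((A 0 b + A 1 b) *
            (Real.negMulLog (A 0 b / (A 0 b + A 1 b))
              + Real.negMulLog (A 1 b / (A 0 b + A 1 b)))) := by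
      intro b
      have hWb : (∑ j, (1:ℝ)/2 * A j b) = (1/2) * (A 0 b + A 1 b) := by
        rw [Fin.sum_univ_two]; ring
      have hcond : (fun i => ((1:ℝ)/2 * A i b) / ∑ j, (1:ℝ)/2 * A j b)
          = fun i => A i b / (A 0 b + A 1 b) := by
        funext i
        rw [hWb, show (1:ℝ)/2 * A i b = (1/2) * A i b from rfl,
          mul_div_mul_left _ _ (by norm_num : (1:ℝ)/2 ≠ 0)]
      rw [hcond, hWb, shannonEntropy_fin2]
      field_simp
    have hDs : ∀ s, (((E s 0 0).re + (E s 1 1).re)/2) *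
          shannonEntropy (fun i => outProb (E s) (B i) / ((E s 0 0).re + (E s 1 1).re))
        = (1/(2*Real.log 2)) * (((E s 0 0).re + (E s 1 1).re) *
            (Real.negMulLog (outProb (E s) (B 0) / ((E s 0 0).re + (E s 1 1).re))
              + Real.negMulLog (outProb (E s) (B 1) / ((E s 0 0).re + (E s 1 1).re)))) := by
      intro s
      rw [shannonEntropy_fin2]
      field_simp
    simp only [hDb, hDs]
    rw [← Finset.mul_sum, ← Finset.mul_sum]
    apply mul_le_mul_of_nonneg_left _ (by positivity)
    -- fiberwise decomposition
    rw [← Finset.sum_fiberwise Finset.univ f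
      (fun s => ((E s 0 0).re + (E s 1 1).re) *
        (Real.negMulLog (outProb (E s) (B 0) / ((E s 0 0).re + (E s 1 1).re))
          + Real.negMulLog (outProb (E s) (B 1) / ((E s 0 0).re + (E s 1 1).re))))]
    apply Finset.sum_le_sum
    intro b _
    have hTb : ∑ s ∈ Finset.univ.filter (fun s => f s = b),
        ((E s 0 0).re + (E s 1 1).re) = A 0 b + A 1 b := by
      rw [hA]
      rw [← Finset.sum_add_distrib]
      exact Finset.sum_congr rfl fun s _ => (hBsum (E s)).symm
    have h0 := six_log_sum (Finset.univ.filter (fun s => f s = b))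
      (fun s => outProb (E s) (B 0)) (fun s => (E s 0 0).re + (E s 1 1).re)
      (fun s _ => ho 0 s) (fun s _ => hole 0 s) (fun s _ => htnn s)
    have h1 := six_log_sum (Finset.univ.filter (fun s => f s = b))
      (fun s => outProb (E s) (B 1)) (fun s => (E s 0 0).re + (E s 1 1).re)
      (fun s _ => ho 1 s) (fun s _ => hole 1 s) (fun s _ => htnn s)
    rw [hTb] at h0 h1
    calc ∑ s ∈ Finset.univ.filter (fun s => f s = b),
          ((E s 0 0).re + (E s 1 1).re) *
            (Real.negMulLog (outProb (E s) (B 0) / ((E s 0 0).re + (E s 1 1).re))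
              + Real.negMulLog (outProb (E s) (B 1) / ((E s 0 0).re + (E s 1 1).re)))
        = (∑ s ∈ Finset.univ.filter (fun s => f s = b),
            ((E s 0 0).re + (E s 1 1).re) *
              Real.negMulLog (outProb (E s) (B 0) / ((E s 0 0).re + (E s 1 1).re)))
          + ∑ s ∈ Finset.univ.filter (fun s => f s = b),
            ((E s 0 0).re + (E s 1 1).re) *
              Real.negMulLog (outProb (E s) (B 1) / ((E s 0 0).re + (E s 1 1).re)) := by
          rw [← Finset.sum_add_distrib]
          exact Finset.sum_congr rfl fun s _ => by ring
      _ ≤ (A 0 b + A 1 b) * Real.negMulLog (A 0 b / (A 0 b + A 1 b))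
          + (A 0 b + A 1 b) * Real.negMulLog (A 1 b / (A 0 b + A 1 b)) := add_le_add h0 h1
      _ = (A 0 b + A 1 b) *
          (Real.negMulLog (A 0 b / (A 0 b + A 1 b))
            + Real.negMulLog (A 1 b / (A 0 b + A 1 b))) := by ring
  linarith [key]

lemma binEntropy_quad' {w : ℝ} (h : w^2 ≤ 1) :
    (1 - w^2) * Real.log 2 ≤ Real.binEntropy ((1+w)/2) := by
  rcases le_or_gt 0 w with h0 | h0
  · exact binEntropy_quad h0 (by nlinarith)
  · have hb := binEntropy_quad (by linarith : (0:ℝ) ≤ -w) (by nlinarith)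
    rw [show ((1 + -w)/2 : ℝ) = 1 - (1+w)/2 by ring, Real.binEntropy_one_sub] at hb
    calc (1 - w^2) * Real.log 2 = (1 - (-w)^2) * Real.log 2 := by ring_nf
    _ ≤ _ := hb

lemma six_three_entropy {t ux uy uz : ℝ} (ht : 0 < t) (hsq : ux^2 + uy^2 + uz^2 ≤ t^2) :
    2 * Real.log 2 ≤ Real.binEntropy ((1 + ux/t)/2) + Real.binEntropy ((1 + uy/t)/2)
      + Real.binEntropy ((1 + uz/t)/2) := by
  have hL2 : (0:ℝ) < Real.log 2 := Real.log_pos (by norm_num)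
  have hw : ∀ u : ℝ, (u/t)^2 = u^2/t^2 := fun u => div_pow u t 2
  have hb : ∀ u : ℝ, u^2 ≤ t^2 →
      (1 - (u/t)^2) * Real.log 2 ≤ Real.binEntropy ((1+u/t)/2) := by
    intro u hu
    apply binEntropy_quad'
    rw [hw u]
    exact div_le_one_of_le₀ hu (by positivity)
  have hx := hb ux (by nlinarith [sq_nonneg uy, sq_nonneg uz])
  have hy := hb uy (by nlinarith [sq_nonneg ux, sq_nonneg uz])
  have hz := hb uz (by nlinarith [sq_nonneg ux, sq_nonneg uy])
  have hwsum : (ux/t)^2 + (uy/t)^2 + (uz/t)^2 ≤ 1 := by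
    rw [hw ux, hw uy, hw uz, ← add_div, ← add_div]
    exact div_le_one_of_le₀ hsq (by positivity)
  nlinarith [hx, hy, hz, hwsum, hL2]

lemma six_per_outcome {M : Matrix (Fin 2) (Fin 2) ℂ} (hM : M.PosSemidef) :
    (M 0 0).re + (M 1 1).re ≤
      (((M 0 0).re + (M 1 1).re)/2) *
        (shannonEntropy (fun i => outProb M (xbasis i) / ((M 0 0).re + (M 1 1).re))
          + shannonEntropy (fun i => outProb M (ybasis i) / ((M 0 0).re + (M 1 1).re))
          + shannonEntropy (fun i => outProb M (zbasis i) / ((M 0 0).re + (M 1 1).re))) := by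
  have hL2 : (0:ℝ) < Real.log 2 := Real.log_pos (by norm_num)
  have h10 := herm_10 hM.1
  have hre10 : (M 1 0).re = (M 0 1).re := by rw [h10, Complex.conj_re]
  have him10 : (M 1 0).im = -(M 0 1).im := by rw [h10, Complex.conj_im]
  have ha : 0 ≤ (M 0 0).re := by rw [← outProb_z0 M]; exact outProb_nonneg hM _
  have hd : 0 ≤ (M 1 1).re := by rw [← outProb_z1 M]; exact outProb_nonneg hM _
  rcases eq_or_lt_of_le (add_nonneg ha hd) with ht0 | htpos
  · rw [← ht0]
    norm_num
  · set t := (M 0 0).re + (M 1 1).re with htdef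
    have hsq : (2*(M 0 1).re)^2 + (-2*(M 0 1).im)^2 + ((M 0 0).re - (M 1 1).re)^2 ≤ t^2 := by
      have hn := normSq_od_le hM
      rw [Complex.normSq_apply] at hn
      rw [htdef]
      nlinarith
    have hkey := six_three_entropy htpos hsq
    have ex : shannonEntropy (fun i => outProb M (xbasis i) / t)
        = Real.binEntropy ((1 + (2*(M 0 1).re)/t)/2) / Real.log 2 := by
      have e0 : outProb M (xbasis 0) / t = (1 + (2*(M 0 1).re)/t)/2 := by
        rw [outProb_x0 M, hre10]
        field_simp
        ring
      have e1 : outProb M (xbasis 1) / t = 1 - (1 + (2*(M 0 1).re)/t)/2 := by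
        rw [outProb_x1 M, hre10]
        field_simp
        ring
      rw [shannonEntropy_fin2]
      rw [e0, e1, ← Real.binEntropy_eq_negMulLog_add_negMulLog_one_sub]
    have ey : shannonEntropy (fun i => outProb M (ybasis i) / t)
        = Real.binEntropy ((1 + (-2*(M 0 1).im)/t)/2) / Real.log 2 := by
      have e0 : outProb M (ybasis 0) / t = (1 + (-2*(M 0 1).im)/t)/2 := by
        rw [outProb_y0 M, him10]
        field_simp
        ring
      have e1 : outProb M (ybasis 1) / t = 1 - (1 + (-2*(M 0 1).im)/t)/2 := by
        rw [outProb_y1 M, him10]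
        field_simp
        ring
      rw [shannonEntropy_fin2]
      rw [e0, e1, ← Real.binEntropy_eq_negMulLog_add_negMulLog_one_sub]
    have ez : shannonEntropy (fun i => outProb M (zbasis i) / t)
        = Real.binEntropy ((1 + ((M 0 0).re - (M 1 1).re)/t)/2) / Real.log 2 := by
      have e0 : outProb M (zbasis 0) / t = (1 + ((M 0 0).re - (M 1 1).re)/t)/2 := by
        rw [outProb_z0 M]
        field_simp
        ring
      have e1 : outProb M (zbasis 1) / t = 1 - (1 + ((M 0 0).re - (M 1 1).re)/t)/2 := by
        rw [outProb_z1 M]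
        field_simp
        ring
      rw [shannonEntropy_fin2]
      rw [e0, e1, ← Real.binEntropy_eq_negMulLog_add_negMulLog_one_sub]
    rw [ex, ey, ez]
    rw [← add_div, ← add_div]
    rw [show (t/2) * ((Real.binEntropy ((1 + (2*(M 0 1).re)/t)/2)
        + Real.binEntropy ((1 + (-2*(M 0 1).im)/t)/2)
        + Real.binEntropy ((1 + ((M 0 0).re - (M 1 1).re)/t)/2)) / Real.log 2)
      = (t/(2*Real.log 2)) * (Real.binEntropy ((1 + (2*(M 0 1).re)/t)/2)
        + Real.binEntropy ((1 + (-2*(M 0 1).im)/t)/2)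
        + Real.binEntropy ((1 + ((M 0 0).re - (M 1 1).re)/t)/2)) by field_simp]
    calc t = (t/(2*Real.log 2)) * (2 * Real.log 2) := by field_simp
    _ ≤ _ := by
      apply mul_le_mul_of_nonneg_left hkey (by positivity)


end SixStateAux2

/-- Security of the six-state protocol: for any POVM of the joint receiver and any
coarse-grainings `f` (Bob), `g` (Eve), `h` (Fred) of the outcomes,
`I_x(A:B) + I_y(A:E) + I_z(A:F) ≤ 1`. -/
theorem six_state_security
    {S Bo Ev Fr : Type*} [Fintype S] [Fintype Bo] [DecidableEq Bo]
    [Fintype Ev] [DecidableEq Ev] [Fintype Fr] [DecidableEq Fr]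
    (E : S → Matrix (Fin 2) (Fin 2) ℂ) (hE : IsPOVM E)
    (f : S → Bo) (g : S → Ev) (h : S → Fr) :
    mutInfoCG xbasis (fun _ => (1 : ℝ) / 2) E f
      + mutInfoCG ybasis (fun _ => (1 : ℝ) / 2) E g
      + mutInfoCG zbasis (fun _ => (1 : ℝ) / 2) E h ≤ 1 := by
  have h100 : (1 : Matrix (Fin 2) (Fin 2) ℂ) 0 0 = 1 := Matrix.one_apply_eq 0
  have h111 : (1 : Matrix (Fin 2) (Fin 2) ℂ) 1 1 = 1 := Matrix.one_apply_eq 1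
  have h101 : (1 : Matrix (Fin 2) (Fin 2) ℂ) 0 1 = 0 := Matrix.one_apply_ne (by decide)
  have h110 : (1 : Matrix (Fin 2) (Fin 2) ℂ) 1 0 = 0 := Matrix.one_apply_ne (by decide)
  have hxs : ∀ M : Matrix (Fin 2) (Fin 2) ℂ,
      outProb M (xbasis 0) + outProb M (xbasis 1) = (M 0 0).re + (M 1 1).re := by
    intro M; rw [outProb_x0 M, outProb_x1 M]; ring
  have hys : ∀ M : Matrix (Fin 2) (Fin 2) ℂ,
      outProb M (ybasis 0) + outProb M (ybasis 1) = (M 0 0).re + (M 1 1).re := by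
    intro M; rw [outProb_y0 M, outProb_y1 M]; ring
  have hzs : ∀ M : Matrix (Fin 2) (Fin 2) ℂ,
      outProb M (zbasis 0) + outProb M (zbasis 1) = (M 0 0).re + (M 1 1).re := by
    intro M; rw [outProb_z0 M, outProb_z1 M]
  have hx0 : outProb 1 (xbasis 0) = 1 := by
    rw [outProb_x0, h100, h111, h101, h110]; norm_num
  have hx1 : outProb 1 (xbasis 1) = 1 := by
    rw [outProb_x1, h100, h111, h101, h110]; norm_num
  have hy0 : outProb 1 (ybasis 0) = 1 := by
    rw [outProb_y0, h100, h111, h101, h110]; norm_num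
  have hy1 : outProb 1 (ybasis 1) = 1 := by
    rw [outProb_y1, h100, h111, h101, h110]; norm_num
  have hz0 : outProb 1 (zbasis 0) = 1 := by rw [outProb_z0, h100]; norm_num
  have hz1 : outProb 1 (zbasis 1) = 1 := by rw [outProb_z1, h111]; norm_num
  have hbx := six_basis_bound E hE xbasis hxs hx0 hx1 f
  have hby := six_basis_bound E hE ybasis hys hy0 hy1 g
  have hbz := six_basis_bound E hE zbasis hzs hz0 hz1 h
  -- total trace
  have htr : ∑ s, ((E s 0 0).re + (E s 1 1).re) = 2 := by
    have h00 := congrFun (congrFun hE.2 0) 0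
    have h11 := congrFun (congrFun hE.2 1) 1
    rw [Matrix.sum_apply] at h00 h11
    have r00 := congrArg Complex.re h00
    have r11 := congrArg Complex.re h11
    rw [Complex.re_sum] at r00 r11
    rw [h100] at r00
    rw [h111] at r11
    rw [Finset.sum_add_distrib, r00, r11]
    norm_num
  -- per outcome bound summed
  have hper : (2:ℝ) ≤
      ∑ s, ((((E s 0 0).re + (E s 1 1).re)/2) *
          shannonEntropy (fun i => outProb (E s) (xbasis i) / ((E s 0 0).re + (E s 1 1).re))
        + ((((E s 0 0).re + (E s 1 1).re)/2) *
          shannonEntropy (fun i => outProb (E s) (ybasis i) / ((E s 0 0).re + (E s 1 1).re))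
        + (((E s 0 0).re + (E s 1 1).re)/2) *
          shannonEntropy (fun i => outProb (E s) (zbasis i) / ((E s 0 0).re + (E s 1 1).re)))) := by
    calc (2:ℝ) = ∑ s, ((E s 0 0).re + (E s 1 1).re) := htr.symm
    _ ≤ _ := Finset.sum_le_sum fun s _ =>
        le_trans (six_per_outcome (hE.1 s)) (le_of_eq (by ring))
  rw [Finset.sum_add_distrib, Finset.sum_add_distrib] at hper
  linarith [hbx, hby, hbz, hper]
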